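/- Let η_1, …, η_n ∈ H²(A) with ht(η_i) < i for every i (i.e., η_i ∈ F_{i−1}(A)). If Σ_{i=1}^n η_i x_i = 0 in the Bott ring R_A, then η_i = 0 for all i. -/

import Mathlib

open MvPolynomial

namespace Bott

/-- A square integer matrix indexed by `Fin n` (rows, columns).  We think of it as the
matrix `A = (a_{ij})` defining a Bott tower; strict lower triangularity is the
predicate `SLT` below. -/
abbrev Mat (n : ℕ) := Fin n → Fin n → ℤ

/-- `a` is strictly lower triangular: `a i j = 0` unless `j < i`. -/
def SLT {n : ℕ} (a : Mat n) : Prop := ∀ i j : Fin n, a i j ≠ 0 → (j : ℕ) < (i : ℕ)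

section Defs

variable (n : ℕ)

/-- The linear form `α_i = ∑_{j<i} a_{ij} x_j` (the terms with `j ≥ i` vanish for a
strictly lower triangular matrix). -/
noncomputable def alpha (a : Mat n) (i : Fin n) : MvPolynomial (Fin n) ℤ :=
  ∑ j, C (a i j) * X j

/-- The ideal `(x_i² − α_i x_i : 1 ≤ i ≤ n)`. -/
noncomputable def bottIdeal (a : Mat n) : Ideal (MvPolynomial (Fin n) ℤ) :=
  Ideal.span (Set.range fun i : Fin n => X i ^ 2 - alpha n a i * X i)

/-- The Bott ring `R_A = ℤ[x_1,…,x_n]/(x_i² − α_i x_i)`. -/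
abbrev BRing (a : Mat n) := MvPolynomial (Fin n) ℤ ⧸ bottIdeal n a

/-- Quotient projection onto the Bott ring. -/
noncomputable def bmk (a : Mat n) : MvPolynomial (Fin n) ℤ →+* BRing n a :=
  Ideal.Quotient.mk _

/-- The class `x_i` in the Bott ring (0-based: `bx a i` is the paper's `x_{i+1}`). -/
noncomputable def bx (a : Mat n) (i : Fin n) : BRing n a := bmk n a (X i)

/-- The class of `α_i` in the Bott ring. -/
noncomputable def bal (a : Mat n) (i : Fin n) : BRing n a := bmk n a (alpha n a i)

/-- `F_k(A)`: the span of the first `k` degree-2 generators (paper's `x_1, …, x_k`,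
0-based indices `< k`). -/
noncomputable def F (a : Mat n) (k : ℕ) : Submodule ℤ (BRing n a) :=
  Submodule.span ℤ (bx n a '' {i : Fin n | (i : ℕ) < k})

/-- `H²(A)`: the span of all the degree-2 generators. -/
noncomputable def H2 (a : Mat n) : Submodule ℤ (BRing n a) :=
  Submodule.span ℤ (Set.range (bx n a))

/-- `ht(η) = min {k | η ∈ F_k(A)}`. -/
noncomputable def ht (a : Mat n) (η : BRing n a) : ℕ := sInf {k | η ∈ F n a k}

/-- A ring isomorphism between Bott rings is graded iff it preserves the degree-2
components in both directions (both rings are generated in degree 2, so this is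
equivalent to preserving the whole grading). -/
def IsGraded (a b : Mat n) (φ : BRing n a ≃+* BRing n b) : Prop :=
  (∀ z ∈ H2 n a, φ z ∈ H2 n b) ∧ (∀ z ∈ H2 n b, φ.symm z ∈ H2 n a)

/-- `φ` is `k`-stable: `φ(F_k(A)) ⊆ F_k(B)`. -/
def IsStable (a b : Mat n) (k : ℕ) (φ : BRing n a ≃+* BRing n b) : Prop :=
  ∀ z ∈ F n a k, φ z ∈ F n b k

/-! ### Rationalizations -/

/-- The linear form `α_i` with rational coefficients. -/
noncomputable def alphaQ (a : Mat n) (i : Fin n) : MvPolynomial (Fin n) ℚ :=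
  ∑ j, C ((a i j : ℚ)) * X j

noncomputable def bottIdealQ (a : Mat n) : Ideal (MvPolynomial (Fin n) ℚ) :=
  Ideal.span (Set.range fun i : Fin n => X i ^ 2 - alphaQ n a i * X i)

/-- The rationalized Bott ring `R_A ⊗ ℚ`. -/
abbrev BRingQ (a : Mat n) := MvPolynomial (Fin n) ℚ ⧸ bottIdealQ n a

noncomputable def bmkQ (a : Mat n) : MvPolynomial (Fin n) ℚ →+* BRingQ n a :=
  Ideal.Quotient.mk _

noncomputable def bxQ (a : Mat n) (i : Fin n) : BRingQ n a := bmkQ n a (X i)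

noncomputable def balQ (a : Mat n) (i : Fin n) : BRingQ n a := bmkQ n a (alphaQ n a i)

/-- `F_k(A) ⊗ ℚ` inside `R_A ⊗ ℚ`. -/
noncomputable def FQ (a : Mat n) (k : ℕ) : Submodule ℚ (BRingQ n a) :=
  Submodule.span ℚ (bxQ n a '' {i : Fin n | (i : ℕ) < k})

/-- The canonical map `R_A → R_A ⊗ ℚ`. -/
noncomputable def toQ (a : Mat n) : BRing n a →+* BRingQ n a :=
  Ideal.Quotient.lift (bottIdeal n a)
    ((bmkQ n a).comp (MvPolynomial.map (Int.castRingHom ℚ)))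
    (by
      intro p hp
      have hmap : ∀ i : Fin n,
          MvPolynomial.map (Int.castRingHom ℚ) (alpha n a i) = alphaQ n a i := by
        intro i
        simp [alpha, alphaQ, map_sum]
      have h : bottIdeal n a ≤
          Ideal.comap (MvPolynomial.map (Int.castRingHom ℚ)) (bottIdealQ n a) := by
        rw [bottIdeal, Ideal.span_le]
        rintro _ ⟨i, rfl⟩
        simp only [SetLike.mem_coe, Ideal.mem_comap, map_sub, map_mul, map_pow,
          MvPolynomial.map_X, hmap]
        exact Ideal.subset_span ⟨i, rfl⟩
      rw [RingHom.comp_apply]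
      exact Ideal.Quotient.eq_zero_iff_mem.mpr (h hp))

/-- The truncated linear form `β̄_ℓ` (rational version): for a 0-based row index `li`,
this is `∑_{k ≤ j < li} b_{li,j} y_j`, i.e. the paper's `β_ℓ` with its terms in
`F_k(B)` removed. -/
noncomputable def bbarQ (b : Mat n) (k : ℕ) (li : Fin n) : BRingQ n b :=
  ∑ j ∈ Finset.univ.filter (fun j : Fin n => k ≤ (j : ℕ) ∧ j < li),
    (b li j : ℚ) • bxQ n b j

/-- Half of the truncated linear form `β̄_ℓ / 2` (meaningful when all relevant entries
are even), as an element of the integral Bott ring. -/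
noncomputable def bbarHalf (b : Mat n) (k : ℕ) (li : Fin n) : BRing n b :=
  ∑ j ∈ Finset.univ.filter (fun j : Fin n => k ≤ (j : ℕ) ∧ j < li),
    (b li j / 2) • bx n b j

/-! ### Switching and twisting -/

/-- The matrix obtained from `b` by exchanging the rows and columns `p` and `q`. -/
def swapMat (b : Mat n) (p q : Fin n) : Mat n :=
  fun i j => b (Equiv.swap p q i) (Equiv.swap p q j)

/-- `g : R_C → R_{C'}` is a switching isomorphism: for some `j` (0-based `J`) with
`c_{j+1,j} = 0`, `C'` is obtained from `C` by exchanging the `j`-th and `(j+1)`-st rows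
and columns, and `g` swaps the `j`-th and `(j+1)`-st generators and fixes the others. -/
def IsSwitch (c c' : Mat n) (g : BRing n c ≃+* BRing n c') : Prop :=
  IsGraded n c c' g ∧
  ∃ (J : ℕ) (hJ : J + 1 < n),
    c ⟨J + 1, hJ⟩ ⟨J, by omega⟩ = 0 ∧
    c' = swapMat n c ⟨J, by omega⟩ ⟨J + 1, hJ⟩ ∧
    ∀ i, g (bx n c i) = bx n c' (Equiv.swap (⟨J, by omega⟩ : Fin n) ⟨J + 1, hJ⟩ i)

/-- `g : R_C → R_{C'}` is a twisting isomorphism: for some `j` (0-based `J`) and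
`v ∈ F_{j−1}(C)` with `v(γ_j − v) = 0`, the rows of `C'` before `j` agree with those of
`C`, `γ'_j = γ_j − 2v`, and `g` is a graded isomorphism fixing the first `j−1`
generators. -/
def IsTwist (c c' : Mat n) (g : BRing n c ≃+* BRing n c') : Prop :=
  IsGraded n c c' g ∧
  ∃ (J : ℕ) (hJ : J < n) (v : BRing n c),
    v ∈ F n c J ∧ v * (bal n c ⟨J, hJ⟩ - v) = 0 ∧
    (∀ i : Fin n, (i : ℕ) < J → ∀ m, c' i m = c i m) ∧
    ((∑ m, c' ⟨J, hJ⟩ m • bx n c m) = bal n c ⟨J, hJ⟩ - 2 • v) ∧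
    (∀ i : Fin n, (i : ℕ) < J → g (bx n c i) = bx n c' i)

/-- `IsMoveComp n c c' g` : `g : R_C → R_{C'}` is a finite (possibly empty) composition
of switching and twisting isomorphisms. -/
inductive IsMoveComp : ∀ c c' : Mat n, (BRing n c ≃+* BRing n c') → Prop
  | refl (c : Mat n) : IsMoveComp c c (RingEquiv.refl _)
  | switch {c c' c'' : Mat n} {g : BRing n c ≃+* BRing n c'}
      {g' : BRing n c' ≃+* BRing n c''} :
      IsMoveComp c c' g → IsSwitch n c' c'' g' → IsMoveComp c c'' (g.trans g')
  | twist {c c' c'' : Mat n} {g : BRing n c ≃+* BRing n c'}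
      {g' : BRing n c' ≃+* BRing n c''} :
      IsMoveComp c c' g → IsTwist n c' c'' g' → IsMoveComp c c'' (g.trans g')

end Defs

/-! ### Block matrices for ℚ-trivial Bott manifolds -/

/-- Starting (0-based) index of the `s`-th block for the partition `lam`. -/
def blockStart (t : ℕ) (lam : Fin t → ℕ) (s : Fin t) : ℕ :=
  ∑ s' ∈ Finset.univ.filter (fun s' : Fin t => s' < s), lam s'

/-- The block-diagonal matrix with diagonal blocks `H_{λ_1}, …, H_{λ_t}`, where `H_j`
is the `j × j` strictly lower triangular matrix whose first column below the diagonal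
consists of `1`s and whose other entries vanish. -/
def blockMat (n t : ℕ) (lam : Fin t → ℕ) : Mat n := fun i j =>
  if ∃ s : Fin t, (j : ℕ) = blockStart t lam s ∧ blockStart t lam s < (i : ℕ) ∧
      (i : ℕ) < blockStart t lam s + lam s then 1 else 0

/-- `H²(ℋ_{λ_s})`: the subgroup of the degree-2 component spanned by the generators
belonging to the `s`-th block. -/
noncomputable def blockH2 (n t : ℕ) (lam : Fin t → ℕ) (s : Fin t) :
    Submodule ℤ (BRing n (blockMat n t lam)) :=
  Submodule.span ℤ (bx n (blockMat n t lam) ''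
    {i : Fin n | blockStart t lam s ≤ (i : ℕ) ∧ (i : ℕ) < blockStart t lam s + lam s})

end Bott

namespace Bott

section Aux

variable (n : ℕ)

/-! auxiliary lemmas -/

private lemma bmk_C_mul_X (a : Mat n) (z : ℤ) (x : Fin n) :
    bmk n a (C z * X x) = z • bx n a x := by
  rw [map_mul, show (C z : MvPolynomial (Fin n) ℤ) = (z : MvPolynomial (Fin n) ℤ) from
    eq_intCast (C : ℤ →+* MvPolynomial (Fin n) ℤ) z, map_intCast, ← zsmul_eq_mul]
  rfl

private lemma exists_coeffs (a : Mat n) (k : ℕ) (η : BRing n a) (hη : η ∈ F n a k) :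
    ∃ c : Fin n → ℤ, (∀ j : Fin n, ¬ ((j:ℕ) < k) → c j = 0) ∧
      η = bmk n a (∑ j, C (c j) * X j) := by
  classical
  rw [F, Set.image_eq_range] at hη
  obtain ⟨c, hc⟩ := (Submodule.mem_span_range_iff_exists_fun ℤ).mp hη
  set c' : Fin n → ℤ := fun j => if h : (j:ℕ) < k then c ⟨j, h⟩ else 0 with hc'
  refine ⟨c', fun j hj => dif_neg hj, ?_⟩
  rw [← hc, map_sum]
  have h1 : ∀ x : Fin n, bmk n a (C (c' x) * X x) = c' x • bx n a x := fun x =>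
    bmk_C_mul_X n a _ x
  rw [Finset.sum_congr rfl (fun x _ => h1 x)]
  rw [show (Finset.univ : Finset (Fin n)) =
    Finset.univ.filter (fun j : Fin n => (j:ℕ) < k) ∪
    Finset.univ.filter (fun j : Fin n => ¬ (j:ℕ) < k) from by
      exact (Finset.filter_union_filter_not_eq _ _).symm]
  rw [Finset.sum_union (Finset.disjoint_filter_filter_not _ _ _)]
  have h2 : ∑ x ∈ Finset.univ.filter (fun j : Fin n => ¬ (j:ℕ) < k), c' x • bx n a x = 0 := by
    apply Finset.sum_eq_zero
    intro x hx
    rw [Finset.mem_filter] at hx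
    rw [hc']
    simp only [dif_neg hx.2, zero_smul]
  rw [h2, add_zero]
  rw [Finset.sum_subtype (Finset.univ.filter (fun j : Fin n => (j:ℕ) < k))
    (p := fun j : Fin n => (j:ℕ) < k) (by simp) (f := fun x => c' x • bx n a x)]
  apply Finset.sum_congr rfl
  intro i _
  rw [hc']
  simp only [Subtype.coe_eta]
  split_ifs with hcond
  · rfl
  · exact absurd i.2 hcond

private lemma coeff_alpha (a : Mat n) (i j : Fin n) :
    coeff (Finsupp.single j 1) (alpha n a i) = a i j := by
  classical
  rw [alpha, coeff_sum]
  simp only [coeff_C_mul, coeff_X']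
  rw [Finset.sum_eq_single j]
  · simp
  · intro k _ hk
    rw [if_neg, mul_zero]
    intro hsingle
    exact hk (by simpa using (Finsupp.single_left_inj one_ne_zero).mp hsingle)
  · simp

private lemma support_pair (p q : Fin n) (hpq : q ≠ p) (i : Fin n) :
    i ∈ (Finsupp.single q 1 + Finsupp.single p 1 : Fin n →₀ ℕ).support ↔ (i = q ∨ i = p) := by
  simp only [Finsupp.mem_support_iff, Finsupp.add_apply, Finsupp.single_apply]
  split_ifs <;> simp_all (config := {decide := false}) [eq_comm]

private lemma pair_sub_q (p q : Fin n) :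
    (Finsupp.single q 1 + Finsupp.single p 1 : Fin n →₀ ℕ) - Finsupp.single q 1
      = Finsupp.single p 1 := by
  ext x; simp [Finsupp.tsub_apply, Finsupp.add_apply]

private lemma pair_sub_p (p q : Fin n) :
    (Finsupp.single q 1 + Finsupp.single p 1 : Fin n →₀ ℕ) - Finsupp.single p 1
      = Finsupp.single q 1 := by
  ext x; simp [Finsupp.tsub_apply, Finsupp.add_apply]

private lemma sp2_sub (p : Fin n) :
    (Finsupp.single p 2 : Fin n →₀ ℕ) - Finsupp.single p 1 = Finsupp.single p 1 := by
  ext x; simp only [Finsupp.tsub_apply, Finsupp.single_apply]; split_ifs <;> simp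

private lemma support_sp2 (p i : Fin n) :
    i ∈ (Finsupp.single p 2 : Fin n →₀ ℕ).support ↔ i = p := by
  simp only [Finsupp.mem_support_iff, Finsupp.single_apply]
  split_ifs <;> simp_all <;> omega

private lemma sp2_ne_pair (p q i : Fin n) (hpq : q ≠ p) :
    (Finsupp.single i 2 : Fin n →₀ ℕ) ≠ Finsupp.single q 1 + Finsupp.single p 1 := by
  intro hcontra
  have hp := DFunLike.congr_fun hcontra p
  simp only [Finsupp.add_apply, Finsupp.single_apply] at hp
  split_ifs at hp <;> simp_all

private lemma sp2_eq_sp2 (i p : Fin n) :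
    ((Finsupp.single i 2 : Fin n →₀ ℕ) = Finsupp.single p 2) ↔ i = p := by
  constructor
  · intro hcontra; by_contra hne
    have := DFunLike.congr_fun hcontra i
    simp only [Finsupp.single_apply] at this
    split_ifs at this <;> simp_all
  · rintro rfl; rfl

private lemma degree_pair (p q : Fin n) (hpq : q ≠ p) :
    (Finsupp.single q 1 + Finsupp.single p 1 : Fin n →₀ ℕ).degree = 2 := by
  simp [Finsupp.degree_eq_weight_one, map_add, Finsupp.weight_apply,
    Finsupp.sum_single_index]

private lemma degree_sp2 (p : Fin n) :
    (Finsupp.single p 2 : Fin n →₀ ℕ).degree = 2 := by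
  simp [Finsupp.degree_eq_weight_one, Finsupp.weight_apply, Finsupp.sum_single_index]

private lemma coeff_mul_homog (r g : MvPolynomial (Fin n) ℤ) (hr : r.IsHomogeneous 2)
    (m : Fin n →₀ ℕ) (hm : m.degree = 2) :
    coeff m (g * r) = constantCoeff g * coeff m r := by
  classical
  rw [coeff_mul]
  rw [Finset.sum_eq_single (0, m)]
  · simp [constantCoeff_eq]
  · rintro ⟨m1, m2⟩ hmem hne
    rw [Finset.HasAntidiagonal.mem_antidiagonal] at hmem
    rcases eq_or_ne m1 0 with h1 | h1
    · exfalso; apply hne; subst h1; simp at hmem; simp [hmem]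
    · have hdeg : m1.degree + m2.degree = 2 := by
        rw [← hm, ← hmem]
        simp [Finsupp.degree_eq_weight_one, map_add]
      have h1' : m1.degree ≠ 0 := fun hz => h1 ((Finsupp.degree_eq_zero_iff m1).mp hz)
      have : m2.degree ≠ 2 := by omega
      rw [hr.coeff_eq_zero this, mul_zero]
  · intro hmem
    exfalso; exact hmem (by simp)

private lemma alpha_isHomogeneous (a : Mat n) (i : Fin n) :
    (alpha n a i).IsHomogeneous 1 := by
  rw [alpha]
  apply IsHomogeneous.sum
  intro j _
  simpa using (isHomogeneous_C _ (a i j)).mul (isHomogeneous_X _ j)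

private lemma rel_isHomogeneous (a : Mat n) (i : Fin n) :
    (X i ^ 2 - alpha n a i * X i).IsHomogeneous 2 := by
  apply IsHomogeneous.sub
  · simpa using (isHomogeneous_X ℤ i).pow 2
  · simpa using (alpha_isHomogeneous n a i).mul (isHomogeneous_X ℤ i)

/-- coefficient of the pair monomial in `α_i(matrix b) * X i` -/
private lemma coeff_pair_mul (b : Mat n) (p q : Fin n) (hpq : q ≠ p) (i : Fin n) :
    coeff (Finsupp.single q 1 + Finsupp.single p 1) (alpha n b i * X i) =
      (if i = q then b q p else 0) + (if i = p then b p q else 0) := by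
  classical
  rw [coeff_mul_X']
  by_cases hiq : i = q
  · subst hiq
    have hip : i ≠ p := hpq
    rw [if_pos ((support_pair n p i hpq i).mpr (Or.inl rfl)), pair_sub_q, coeff_alpha]
    simp [hip]
  · by_cases hip : i = p
    · subst hip
      rw [if_pos ((support_pair n i q hpq i).mpr (Or.inr rfl)), pair_sub_p, coeff_alpha]
      simp [hiq]
    · rw [if_neg (fun hmem => ((support_pair n p q hpq i).mp hmem).elim hiq hip)]
      simp [hiq, hip]

private lemma coeff_sp2_mul (b : Mat n) (p : Fin n) (i : Fin n) :
    coeff (Finsupp.single p 2) (alpha n b i * X i) = if i = p then b p p else 0 := by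
  classical
  rw [coeff_mul_X']
  by_cases hip : i = p
  · subst hip
    rw [if_pos ((support_sp2 n i i).mpr rfl), sp2_sub, coeff_alpha]
    simp
  · rw [if_neg (fun hmem => hip ((support_sp2 n p i).mp hmem))]
    simp [hip]


end Aux

/-- If `η_1, …, η_n ∈ H²(A)` with `ht(η_i) < i` (i.e. with 0-based
indexing, `η i ∈ F_i(A)`), and `∑ η_i x_i = 0` in `R_A`, then all `η_i = 0`. -/
theorem stmt_1 (n : ℕ) (hn : 1 ≤ n) (a : Mat n) (ha : SLT a)
    (η : Fin n → BRing n a) (hη : ∀ i : Fin n, η i ∈ F n a i)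
    (h : ∑ i, η i * bx n a i = 0) :
    ∀ i, η i = 0 := by
  classical
  have hex : ∀ i : Fin n, ∃ cr : Fin n → ℤ, (∀ j : Fin n, ¬((j:ℕ) < (i:ℕ)) → cr j = 0) ∧
      η i = bmk n a (∑ j, C (cr j) * X j) := fun i => exists_coeffs n a i (η i) (hη i)
  choose c hc0 hcη using hex
  have hηalpha : ∀ i, η i = bmk n a (alpha n c i) := fun i => hcη i
  set poly : MvPolynomial (Fin n) ℤ := ∑ i, alpha n c i * X i with hpoly
  have hmem : poly ∈ bottIdeal n a := by
    have : bmk n a poly = 0 := by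
      rw [hpoly, map_sum, ← h]
      apply Finset.sum_congr rfl
      intro i _
      rw [map_mul, hηalpha i]
      rfl
    exact Ideal.Quotient.eq_zero_iff_mem.mp this
  rw [bottIdeal, Ideal.mem_span_range_iff_exists_fun] at hmem
  obtain ⟨g, hg⟩ := hmem
  -- key: off-diagonal coefficients vanish
  have key : ∀ p q : Fin n, (q:ℕ) < (p:ℕ) → c p q = 0 := by
    intro p q hqp
    have hpq : q ≠ p := fun hcontra => by rw [hcontra] at hqp; omega
    set mpq : Fin n →₀ ℕ := Finsupp.single q 1 + Finsupp.single p 1 with hmpq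
    set sp2 : Fin n →₀ ℕ := Finsupp.single p 2 with hsp2
    -- value of the functional on poly, computed from the explicit form
    have hval1 : coeff mpq poly + a p q * coeff sp2 poly = c p q := by
      rw [hpoly, coeff_sum, coeff_sum]
      have e1 : ∀ i : Fin n, coeff mpq (alpha n c i * X i) =
          (if i = q then c q p else 0) + (if i = p then c p q else 0) := fun i =>
        coeff_pair_mul n c p q hpq i
      have e2 : ∀ i : Fin n, coeff sp2 (alpha n c i * X i) =
          (if i = p then c p p else 0) := fun i => coeff_sp2_mul n c p i
      rw [Finset.sum_congr rfl (fun i _ => e1 i), Finset.sum_congr rfl (fun i _ => e2 i)]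
      rw [Finset.sum_add_distrib, Finset.sum_ite_eq' Finset.univ q (fun _ => c q p),
        Finset.sum_ite_eq' Finset.univ p (fun _ => c p q),
        Finset.sum_ite_eq' Finset.univ p (fun _ => c p p)]
      have hcqp : c q p = 0 := hc0 q p (by omega)
      have hcpp : c p p = 0 := hc0 p p (by omega)
      simp [hcqp, hcpp]
    -- value of the functional on poly, computed from ideal membership
    have hval2 : coeff mpq poly + a p q * coeff sp2 poly = 0 := by
      rw [← hg, coeff_sum, coeff_sum]
      have e1 : ∀ i : Fin n, coeff mpq (g i * (X i ^ 2 - alpha n a i * X i)) =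
          constantCoeff (g i) * coeff mpq (X i ^ 2 - alpha n a i * X i) := fun i =>
        coeff_mul_homog n _ _ (rel_isHomogeneous n a i) _ (degree_pair n p q hpq)
      have e2 : ∀ i : Fin n, coeff sp2 (g i * (X i ^ 2 - alpha n a i * X i)) =
          constantCoeff (g i) * coeff sp2 (X i ^ 2 - alpha n a i * X i) := fun i =>
        coeff_mul_homog n _ _ (rel_isHomogeneous n a i) _ (degree_sp2 n p)
      rw [Finset.sum_congr rfl (fun i _ => e1 i), Finset.sum_congr rfl (fun i _ => e2 i)]
      rw [Finset.mul_sum, ← Finset.sum_add_distrib]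
      apply Finset.sum_eq_zero
      intro i _
      have hXsq1 : coeff mpq ((X i : MvPolynomial (Fin n) ℤ) ^ 2) = 0 := by
        rw [coeff_X_pow, if_neg (sp2_ne_pair n p q i hpq)]
      have hXsq2 : coeff sp2 ((X i : MvPolynomial (Fin n) ℤ) ^ 2) =
          if i = p then 1 else 0 := by
        rw [coeff_X_pow, hsp2]
        by_cases hip : i = p
        · rw [if_pos ((sp2_eq_sp2 n i p).mpr hip), if_pos hip]
        · rw [if_neg (fun hcon => hip ((sp2_eq_sp2 n i p).mp hcon)), if_neg hip]
      have haqp : a q p = 0 := by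
        by_contra hne
        exact absurd (ha q p hne) (by omega)
      have happ : a p p = 0 := by
        by_contra hne
        exact absurd (ha p p hne) (by omega)
      rw [coeff_sub, coeff_sub, hXsq1, hXsq2, coeff_pair_mul n a p q hpq i,
        coeff_sp2_mul n a p i]
      by_cases hip : i = p
      · subst hip
        simp [hpq.symm ∘ Eq.symm, haqp, happ]
        ring
      · by_cases hiq : i = q
        · subst hiq
          simp [hip, haqp]
        · simp [hip, hiq]
    have : c p q = 0 := by rw [← hval1, hval2]
    exact this
  -- conclude
  intro i
  rw [hηalpha i, alpha]
  have : ∀ j : Fin n, C (c i j) * (X j : MvPolynomial (Fin n) ℤ) = 0 := by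
    intro j
    by_cases hj : (j:ℕ) < (i:ℕ)
    · rw [key i j hj, map_zero, zero_mul]
    · rw [hc0 i j hj, map_zero, zero_mul]
  rw [Finset.sum_congr rfl (fun j _ => this j)]
  simp

end Bott
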